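/- arXiv:1605.02717 — 3 statements merged into one kernel-verified Lean document; each statement's English description precedes it below -/
import Mathlib

section
/- Let V be a finite-dimensional vector space over ℚ, N ≥ 1 an integer, and p a prime not dividing N. If Λ ⊆ V is a ℤ[1/(pN)]-lattice (a finitely generated ℤ[1/(pN)]-submodule spanning V) and L ⊆ V ⊗ ℚ_p is a ℤ_p-lattice, then L ∩ Λ is a ℤ[1/N]-lattice in V, i.e. a free finitely generated ℤ[1/N]-module spanning V over ℚ. -/
/-!
STATEMENT 0: Let V be a finite-dimensional ℚ-vector space, N ≥ 1, p a prime not dividing N.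
If Λ ⊆ V is a ℤ[1/(pN)]-lattice and L ⊆ V ⊗ ℚ_p is a ℤ_p-lattice, then L ∩ Λ is a
ℤ[1/N]-lattice in V (free, finitely generated over ℤ[1/N], spanning V over ℚ).
-/

open scoped TensorProduct

set_option synthInstance.maxHeartbeats 1000000
set_option maxHeartbeats 2000000
noncomputable section

/-- `ℤ[1/m]`, realised as the subring of `ℚ` generated by `1/m`. -/
def zInv (m : ℕ) : Subring ℚ := Subring.closure {((m : ℚ))⁻¹}

/-- A ℚ-vector space is a module over `ℤ[1/m] ⊆ ℚ` by restriction of scalars. -/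
instance zInvModule (m : ℕ) (V : Type*) [AddCommGroup V] [Module ℚ V] :
    Module (zInv m) V :=
  Module.compHom V (zInv m).subtype

/-- `ℚ_p ⊗ V` is a module over `ℤ_p` by restriction of scalars. -/
instance padicIntModule (p : ℕ) [Fact p.Prime] (W : Type*) [AddCommGroup W]
    [Module ℚ_[p] W] : Module ℤ_[p] W :=
  Module.compHom W (PadicInt.Coe.ringHom : ℤ_[p] →+* ℚ_[p])

lemma zInv_smul_def {m : ℕ} {V : Type*} [AddCommGroup V] [Module ℚ V]
    (c : zInv m) (x : V) : c • x = (c : ℚ) • x := rfl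

lemma padic_smul_def {p : ℕ} [Fact p.Prime] {W : Type*} [AddCommGroup W]
    [Module ℚ_[p] W] (c : ℤ_[p]) (x : W) : c • x = (c : ℚ_[p]) • x := rfl

lemma rat_smul_tensor {p : ℕ} [Fact p.Prime] {V : Type*} [AddCommGroup V] [Module ℚ V]
    (q : ℚ) (y : ℚ_[p] ⊗[ℚ] V) : q • y = ((q : ℚ_[p])) • y := by
  rw [← algebraMap_smul ℚ_[p] q y, eq_ratCast]

/-- The subring of rationals with denominator a power of m. -/
def zInvS (m : ℕ) (hm : m ≠ 0) : Subring ℚ where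
  carrier := {q : ℚ | ∃ (k : ℕ) (z : ℤ), q = z / (m : ℚ) ^ k}
  zero_mem' := ⟨0, 0, by simp⟩
  one_mem' := ⟨0, 1, by simp⟩
  add_mem' := by
    rintro a b ⟨k, z, rfl⟩ ⟨l, w, rfl⟩
    have hm' : (m : ℚ) ≠ 0 := Nat.cast_ne_zero.mpr hm
    refine ⟨k + l, z * m ^ l + w * m ^ k, ?_⟩
    rw [div_add_div _ _ (pow_ne_zero k hm') (pow_ne_zero l hm'), pow_add]
    push_cast; ring_nf
  neg_mem' := by
    rintro a ⟨k, z, rfl⟩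
    exact ⟨k, -z, by push_cast; ring⟩
  mul_mem' := by
    rintro a b ⟨k, z, rfl⟩ ⟨l, w, rfl⟩
    have hm' : (m : ℚ) ≠ 0 := Nat.cast_ne_zero.mpr hm
    refine ⟨k + l, z * w, ?_⟩
    rw [div_mul_div_comm, pow_add]
    push_cast; ring_nf

lemma mem_zInv_iff {m : ℕ} (hm : m ≠ 0) {q : ℚ} :
    q ∈ zInv m ↔ ∃ (k : ℕ) (z : ℤ), q = z / (m : ℚ) ^ k := by
  have hm' : (m : ℚ) ≠ 0 := Nat.cast_ne_zero.mpr hm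
  constructor
  · intro hq
    have : zInv m ≤ zInvS m hm := by
      rw [zInv, Subring.closure_le]
      rintro x rfl
      exact ⟨1, 1, by simp⟩
    exact this hq
  · rintro ⟨k, z, rfl⟩
    have h1 : ((m : ℚ))⁻¹ ∈ zInv m := Subring.subset_closure rfl
    have h2 : (z : ℚ) ∈ zInv m := intCast_mem _ z
    have := mul_mem h2 (pow_mem h1 k)
    simpa [div_eq_mul_inv, inv_pow] using this

lemma zInv_inv_mem (m : ℕ) : ((m : ℚ))⁻¹ ∈ zInv m := Subring.subset_closure rfl

lemma zInv_pid {m : ℕ} (hm : m ≠ 0) : IsPrincipalIdealRing (zInv m) := by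
  have hm' : (m : ℚ) ≠ 0 := Nat.cast_ne_zero.mpr hm
  constructor
  intro I
  set J : Ideal ℤ := I.comap (Int.castRingHom (zInv m)) with hJ
  obtain ⟨d, hd⟩ := (IsPrincipalIdealRing.principal J)
  refine ⟨⟨(d : zInv m), ?_⟩⟩
  set u : zInv m := ⟨((m : ℚ))⁻¹, zInv_inv_mem m⟩ with hu
  have hmu : (m : zInv m) * u = 1 := by
    ext; push_cast [hu]; field_simp
  apply le_antisymm
  · intro x hx
    obtain ⟨k, z, hz⟩ := (mem_zInv_iff hm).mp x.2
    have hzx : (z : zInv m) = (m : zInv m) ^ k * x := by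
      ext; push_cast [hz]; field_simp
    have hzI : (z : zInv m) ∈ I := by
      rw [hzx]; exact Ideal.mul_mem_left I _ hx
    have hzJ : z ∈ J := by simpa [hJ, Ideal.mem_comap] using hzI
    rw [hd] at hzJ
    obtain ⟨w, hw⟩ := Ideal.mem_span_singleton.mp hzJ
    refine Ideal.mem_span_singleton.mpr ⟨(w : zInv m) * u ^ k, ?_⟩
    ext
    have hxq : (x : ℚ) = z / (m : ℚ) ^ k := hz
    push_cast [hxq, hw, hu]
    field_simp
    rw [one_div, inv_pow, mul_assoc, mul_inv_cancel₀ (pow_ne_zero k hm'), mul_one]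
  · rw [Submodule.span_le, Set.singleton_subset_iff]
    have : d ∈ J := by rw [hd]; exact Submodule.mem_span_singleton_self d
    simpa [hJ, Ideal.mem_comap] using this

variable {p : ℕ} [Fact p.Prime]

lemma norm_N_eq_one {N : ℕ} (hN : N ≠ 0) (hp : ¬ p ∣ N) : ‖((N : ℚ) : ℚ_[p])‖ = 1 := by
  have h1 : ‖((N : ℤ) : ℚ_[p])‖ ≤ 1 := Padic.norm_int_le_one _
  have h2 : ¬ ‖((N : ℤ) : ℚ_[p])‖ < 1 := by
    rw [Padic.norm_intCast_lt_one_iff]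
    exact_mod_cast hp
  have : ‖((N : ℤ) : ℚ_[p])‖ = 1 := le_antisymm h1 (not_lt.mp h2)
  simpa using this

lemma norm_le_one_of_mem_zInv {N : ℕ} (hN : N ≠ 0) (hp : ¬ p ∣ N) {q : ℚ}
    (hq : q ∈ zInv N) : ‖((q : ℚ_[p]) : ℚ_[p])‖ ≤ 1 := by
  obtain ⟨k, z, rfl⟩ := (mem_zInv_iff hN).mp hq
  have : ((((z : ℚ) / (N : ℚ) ^ k) : ℚ) : ℚ_[p]) = (z : ℚ_[p]) / ((N:ℚ) : ℚ_[p]) ^ k := by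
    push_cast; ring
  rw [this, norm_div, norm_pow, norm_N_eq_one hN hp]
  simpa using Padic.norm_int_le_one z

lemma mem_zInv_of_norm_le_one {N : ℕ} (hN : N ≠ 0) (hp : ¬ p ∣ N) {q : ℚ}
    (hq : q ∈ zInv (p * N)) (hn : ‖((q : ℚ_[p]))‖ ≤ 1) : q ∈ zInv N := by
  have hppos := (Fact.out : p.Prime).pos
  have hpN : p * N ≠ 0 := by positivity
  have hp0 : (p : ℚ) ≠ 0 := by exact_mod_cast hppos.ne'
  have hN0 : (N : ℚ) ≠ 0 := Nat.cast_ne_zero.mpr hN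
  obtain ⟨k, z, rfl⟩ := (mem_zInv_iff hpN).mp hq
  have hcast : (((z : ℚ) / ((p*N : ℕ) : ℚ) ^ k : ℚ) : ℚ_[p])
      = (z : ℚ_[p]) / (((p*N:ℕ) : ℚ) : ℚ_[p]) ^ k := by push_cast; ring
  have hnormPN : ‖(((p*N:ℕ) : ℚ) : ℚ_[p])‖ = (p : ℝ)⁻¹ := by
    have : (((p*N:ℕ) : ℚ) : ℚ_[p]) = ((p : ℚ_[p])) * (((N:ℚ)) : ℚ_[p]) := by push_cast; ring
    rw [this, norm_mul, Padic.norm_p, norm_N_eq_one hN hp, mul_one]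
  have hz : ‖(z : ℚ_[p])‖ ≤ (p : ℝ) ^ (-k : ℤ) := by
    have hPNne : (((p*N:ℕ) : ℚ) : ℚ_[p]) ≠ 0 := by
      simp only [ne_eq, Rat.cast_eq_zero, Nat.cast_eq_zero]
      exact_mod_cast hpN
    have : (z : ℚ_[p]) = ((((z : ℚ) / ((p*N : ℕ) : ℚ) ^ k : ℚ)) : ℚ_[p]) * (((p*N:ℕ) : ℚ) : ℚ_[p]) ^ k := by
      rw [hcast, div_mul_cancel₀]
      exact pow_ne_zero _ hPNne
    rw [this, norm_mul, norm_pow, hnormPN]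
    calc ‖(((z : ℚ) / ((p*N : ℕ) : ℚ) ^ k : ℚ) : ℚ_[p])‖ * ((p:ℝ)⁻¹) ^ k
        ≤ 1 * ((p:ℝ)⁻¹)^k := by
          apply mul_le_mul_of_nonneg_right hn (by positivity)
      _ = (p : ℝ) ^ (-k : ℤ) := by
          rw [one_mul, ← zpow_natCast ((p:ℝ)⁻¹) k, ← zpow_neg_one, ← zpow_mul]
          norm_num
  obtain ⟨w, hw⟩ := (Padic.norm_int_le_pow_iff_dvd z k).mp hz
  refine (mem_zInv_iff hN).mpr ⟨k, w, ?_⟩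
  rw [hw]
  push_cast
  field_simp
  ring




lemma submodule_fg_of_le {R M : Type*} [Ring R] [AddCommGroup M] [Module R M]
    [IsNoetherianRing R] {S T : Submodule R M} (h : S ≤ T) (hT : T.FG) : S.FG := by
  haveI : Module.Finite R T := Module.Finite.iff_fg.mpr hT
  haveI : IsNoetherian R T := isNoetherian_of_isNoetherianRing_of_finite R T
  have h2 : (S.comap T.subtype).FG := IsNoetherian.noetherian _
  have h3 := h2.map T.subtype
  rwa [Submodule.map_comap_subtype, inf_eq_right.mpr h] at h3

lemma int_smul_mem {m : ℕ} {V : Type*} [AddCommGroup V] [Module ℚ V]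
    {Λ : Submodule (zInv m) V} {x : V} (hx : x ∈ Λ) (z : ℤ) : (z : ℚ) • x ∈ Λ :=
  Λ.smul_mem ⟨(z : ℚ), intCast_mem (zInv m) z⟩ hx

lemma nat_smul_mem {m : ℕ} {V : Type*} [AddCommGroup V] [Module ℚ V]
    {Λ : Submodule (zInv m) V} {x : V} (hx : x ∈ Λ) (n : ℕ) : (n : ℚ) • x ∈ Λ :=
  Λ.smul_mem ⟨(n : ℚ), natCast_mem (zInv m) n⟩ hx

lemma exists_nat_pow_ge {p : ℕ} (hp : 2 ≤ p) (C : ℝ) : ∃ t : ℕ, C ≤ (p : ℝ) ^ t := by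
  obtain ⟨n, hn⟩ := exists_nat_gt C
  refine ⟨n, hn.le.trans ?_⟩
  calc (n : ℝ) ≤ ((2 ^ n : ℕ) : ℝ) := by exact_mod_cast (Nat.lt_two_pow_self (n := n)).le
    _ ≤ ((p ^ n : ℕ) : ℝ) := by exact_mod_cast Nat.pow_le_pow_left hp n
    _ = (p : ℝ) ^ n := by push_cast; ring


theorem lattice_intersect
    (V : Type*) [AddCommGroup V] [Module ℚ V] [FiniteDimensional ℚ V]
    (N : ℕ) (hN : 1 ≤ N) (p : ℕ) [Fact p.Prime] (hp : ¬ (p ∣ N))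
    -- Λ is a ℤ[1/(pN)]-lattice in V
    (Λ : Submodule (zInv (p * N)) V) (hΛfg : Λ.FG)
    (hΛspan : Submodule.span ℚ (Λ : Set V) = ⊤)
    -- L is a ℤ_p-lattice in V ⊗ ℚ_p
    (L : Submodule ℤ_[p] (ℚ_[p] ⊗[ℚ] V)) (hLfg : L.FG)
    (hLspan : Submodule.span ℚ_[p] (L : Set (ℚ_[p] ⊗[ℚ] V)) = ⊤) :
    -- then L ∩ Λ is a ℤ[1/N]-lattice in V
    ∃ M : Submodule (zInv N) V,
      (M : Set V) =
        (Λ : Set V) ∩ ((TensorProduct.mk ℚ ℚ_[p] V 1) ⁻¹' (L : Set (ℚ_[p] ⊗[ℚ] V))) ∧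
      M.FG ∧ Module.Free (zInv N) M ∧ Submodule.span ℚ (M : Set V) = ⊤ := by
  have hN0 : N ≠ 0 := by omega
  have hppos := (Fact.out : p.Prime).pos
  have hpN0 : p * N ≠ 0 := by positivity
  have hp0 : (p : ℚ) ≠ 0 := by exact_mod_cast hppos.ne'
  have hN0' : (N : ℚ) ≠ 0 := Nat.cast_ne_zero.mpr hN0
  set φ : V →ₗ[ℚ] ℚ_[p] ⊗[ℚ] V := TensorProduct.mk ℚ ℚ_[p] V 1 with hφ
  have hle : ∀ q : ℚ, q ∈ zInv N → q ∈ zInv (p * N) := by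
    intro q hq
    obtain ⟨k, z, rfl⟩ := (mem_zInv_iff hN0).mp hq
    refine (mem_zInv_iff hpN0).mpr ⟨k, z * p ^ k, ?_⟩
    push_cast
    rw [mul_pow]
    rw [div_eq_div_iff (by positivity) (by positivity)]
    ring
  set M : Submodule (zInv N) V :=
    { carrier := (Λ : Set V) ∩ (φ ⁻¹' (L : Set (ℚ_[p] ⊗[ℚ] V)))
      add_mem' := by
        rintro a b ⟨haΛ, haL⟩ ⟨hbΛ, hbL⟩
        refine ⟨Λ.add_mem haΛ hbΛ, ?_⟩
        simpa [Set.mem_preimage, map_add] using L.add_mem haL hbL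
      zero_mem' := by
        refine ⟨Λ.zero_mem, ?_⟩
        simpa [Set.mem_preimage, map_zero] using L.zero_mem
      smul_mem' := by
        rintro c x ⟨hxΛ, hxL⟩
        constructor
        · show c • x ∈ (Λ : Set V)
          rw [zInv_smul_def]
          exact Λ.smul_mem ⟨(c : ℚ), hle _ c.2⟩ hxΛ
        · show φ (c • x) ∈ (L : Set (ℚ_[p] ⊗[ℚ] V))
          rw [zInv_smul_def, map_smul, rat_smul_tensor]
          exact L.smul_mem ⟨((c : ℚ) : ℚ_[p]), norm_le_one_of_mem_zInv hN0 hp c.2⟩ hxL } with hM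
  have hMfg : M.FG := by
    classical
    haveI : IsPrincipalIdealRing (zInv N) := zInv_pid hN0
    haveI : IsNoetherianRing (zInv N) := PrincipalIdealRing.isNoetherianRing
    set e : Module.Basis (Fin (Module.finrank ℚ V)) ℚ V := Module.finBasis ℚ V with he
    set B : Module.Basis (Fin (Module.finrank ℚ V)) ℚ_[p] (ℚ_[p] ⊗[ℚ] V) := e.baseChange ℚ_[p] with hB
    have hbridge : ∀ (x : V) (i), B.repr (φ x) i = ((e.repr x i : ℚ) : ℚ_[p]) := by
      intro x i
      have hφx : φ x = (1 : ℚ_[p]) ⊗ₜ[ℚ] x := rfl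
      rw [hφx, hB, Module.Basis.baseChange_repr_tmul, Rat.smul_one_eq_cast]
    obtain ⟨s, hs⟩ := hΛfg
    obtain ⟨u, hu⟩ := hLfg
    set a : ℕ := ∏ g ∈ s, ∏ j, (e.repr g j).den with ha
    have ha0 : 0 < a := Finset.prod_pos fun g _ => Finset.prod_pos fun j _ => (e.repr g j).pos
    have hA : ∀ x ∈ Λ, ∀ i, (a : ℚ) * e.repr x i ∈ zInv (p * N) := by
      intro x hx
      rw [← hs] at hx
      induction hx using Submodule.span_induction with
      | mem g hg =>
          intro i
          have h1 : (e.repr g i).den ∣ ∏ j, (e.repr g j).den :=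
            Finset.dvd_prod_of_mem _ (Finset.mem_univ i)
          have h2 : (∏ j, (e.repr g j).den) ∣ a :=
            Finset.dvd_prod_of_mem _ (Finset.mem_coe.mp hg)
          obtain ⟨b, hb⟩ := h1.trans h2
          refine (mem_zInv_iff hpN0).mpr ⟨0, (e.repr g i).num * b, ?_⟩
          have hden : ((e.repr g i).den : ℚ) * (e.repr g i) = ((e.repr g i).num : ℚ) := by
            rw [mul_comm]; exact_mod_cast Rat.mul_den_eq_num _
          rw [pow_zero, div_one, hb]
          push_cast
          rw [show ((e.repr g i).den : ℚ) * (b : ℚ) * e.repr g i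
              = (((e.repr g i).den : ℚ) * e.repr g i) * b by ring, hden]
      | zero =>
          intro i
          rw [map_zero]
          simpa using (zInv (p * N)).zero_mem
      | add x y hx hy ihx ihy =>
          intro i
          rw [map_add, Finsupp.add_apply, mul_add]
          exact add_mem (ihx i) (ihy i)
      | smul d x hx ih =>
          intro i
          rw [zInv_smul_def, map_smul, Finsupp.smul_apply, smul_eq_mul]
          rw [show (a : ℚ) * ((d : ℚ) * e.repr x i) = (d : ℚ) * ((a : ℚ) * e.repr x i) by ring]
          exact mul_mem d.2 (ih i)
    obtain ⟨C, hC⟩ := Finite.exists_le fun z : u × Fin (Module.finrank ℚ V) =>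
      ‖B.repr (z.1 : ℚ_[p] ⊗[ℚ] V) z.2‖
    obtain ⟨t, htC⟩ := exists_nat_pow_ge (Fact.out : p.Prime).two_le C
    have hLbound : ∀ y ∈ L, ∀ i, ‖B.repr y i‖ ≤ (p : ℝ) ^ t := by
      intro y hy
      rw [← hu] at hy
      induction hy using Submodule.span_induction with
      | mem y hys =>
          intro i
          exact (hC (⟨y, hys⟩, i)).trans htC
      | zero =>
          intro i
          rw [map_zero]
          simp only [Finsupp.coe_zero, Pi.zero_apply, norm_zero]
          positivity
      | add x y hx hy ihx ihy =>
          intro i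
          rw [map_add, Finsupp.add_apply]
          exact le_trans (Padic.nonarchimedean _ _) (max_le (ihx i) (ihy i))
      | smul d y hy ih =>
          intro i
          rw [padic_smul_def, map_smul, Finsupp.smul_apply, smul_eq_mul, norm_mul]
          calc ‖(d : ℚ_[p])‖ * ‖B.repr y i‖ ≤ 1 * (p : ℝ) ^ t :=
                mul_le_mul d.2 (ih i) (norm_nonneg _) zero_le_one
            _ = (p : ℝ) ^ t := one_mul _
    set c : ℚ := (p : ℚ) ^ t * a with hc
    have haQ : (a : ℚ) ≠ 0 := by exact_mod_cast ha0.ne'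
    have hc0 : c ≠ 0 := by rw [hc]; positivity
    have hkey : ∀ x ∈ M, ∀ i, c * e.repr x i ∈ zInv N := by
      rintro x ⟨hxΛ, hxL⟩ i
      apply mem_zInv_of_norm_le_one hN0 hp
      · have h1 : ((p : ℚ)) ^ t ∈ zInv (p * N) :=
          pow_mem (by exact_mod_cast natCast_mem (zInv (p * N)) p) t
        have h2 := mul_mem h1 (hA x hxΛ i)
        rw [hc, mul_assoc]
        exact h2
      · have hq := hLbound (φ x) hxL i
        rw [hbridge x i] at hq
        have hcast : ((c * e.repr x i : ℚ) : ℚ_[p])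
            = ((p : ℚ_[p])) ^ t * (((a : ℚ) : ℚ_[p]) * ((e.repr x i : ℚ) : ℚ_[p])) := by
          rw [hc]; push_cast; ring
        rw [hcast, norm_mul, norm_mul, norm_pow, Padic.norm_p]
        have hna : ‖((a : ℚ) : ℚ_[p])‖ ≤ 1 := by
          simpa using Padic.norm_int_le_one (p := p) (a : ℤ)
        calc ((p : ℝ))⁻¹ ^ t * (‖((a : ℚ) : ℚ_[p])‖ * ‖((e.repr x i : ℚ) : ℚ_[p])‖)
            ≤ ((p : ℝ))⁻¹ ^ t * (1 * (p : ℝ) ^ t) := by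
              apply mul_le_mul_of_nonneg_left _ (by positivity)
              exact mul_le_mul hna hq (norm_nonneg _) zero_le_one
          _ = 1 := by
              rw [one_mul, ← mul_pow, inv_mul_cancel₀ (by exact_mod_cast hppos.ne' : (p:ℝ) ≠ 0), one_pow]
    set T : Submodule (zInv N) V := Submodule.span (zInv N) (Set.range fun i => c⁻¹ • e i) with hT
    have hTfg : T.FG := Submodule.fg_span (Set.finite_range _)
    have hMT : M ≤ T := by
      intro x hx
      have hxr := e.sum_repr x
      rw [← hxr]
      apply Submodule.sum_mem
      intro i _
      have hz := hkey x hx i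
      have hrw : e.repr x i • e i = (⟨c * e.repr x i, hz⟩ : zInv N) • (c⁻¹ • e i) := by
        rw [zInv_smul_def, smul_smul]
        congr 1
        rw [show (c * e.repr x i) * c⁻¹ = (c * c⁻¹) * e.repr x i by ring,
          mul_inv_cancel₀ hc0, one_mul]
      rw [hrw]
      exact T.smul_mem _ (Submodule.subset_span ⟨i, rfl⟩)
    exact submodule_fg_of_le hMT hTfg
  refine ⟨M, rfl, ?_, ?_, ?_⟩
  · exact hMfg
  · haveI : IsPrincipalIdealRing (zInv N) := zInv_pid hN0
    haveI : NoZeroSMulDivisors (zInv N) M := by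
      constructor
      rintro c x h
      have hcoe : (c : ℚ) • (x : V) = 0 := by
        have h2 := congrArg (fun y : M => (y : V)) h
        simpa [zInv_smul_def] using h2
      rcases smul_eq_zero.mp hcoe with h1 | h2
      · left
        ext
        exact_mod_cast h1
      · right
        exact Subtype.ext h2
    haveI : Module.Finite (zInv N) M := Module.Finite.iff_fg.mpr hMfg
    infer_instance
  · -- spans
    rw [eq_top_iff]
    intro v _
    have h1 : ∀ x ∈ Submodule.span ℚ (Λ : Set V), ∃ n : ℕ, 0 < n ∧ ((n : ℚ)) • x ∈ Λ := by
      intro x hx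
      induction hx using Submodule.span_induction with
      | mem x hxs => exact ⟨1, one_pos, by simpa using hxs⟩
      | zero => exact ⟨1, one_pos, by simpa using Λ.zero_mem⟩
      | add x y hx hy ihx ihy =>
          obtain ⟨a, ha, hax⟩ := ihx
          obtain ⟨b, hb, hby⟩ := ihy
          refine ⟨a * b, by positivity, ?_⟩
          have hxy : ((a * b : ℕ) : ℚ) • (x + y)
              = (b : ℚ) • ((a : ℚ) • x) + (a : ℚ) • ((b : ℚ) • y) := by
            rw [smul_add, smul_smul, smul_smul]
            push_cast
            ring_nf
          rw [hxy]
          exact Λ.add_mem (nat_smul_mem hax b) (nat_smul_mem hby a)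
      | smul a x hx ih =>
          obtain ⟨n, hn, hnx⟩ := ih
          refine ⟨n * a.den, by positivity, ?_⟩
          have hda : (a.den : ℚ) * a = (a.num : ℚ) := by
            rw [mul_comm]; exact_mod_cast Rat.mul_den_eq_num a
          have : ((n * a.den : ℕ) : ℚ) • (a • x) = (a.num : ℚ) • ((n : ℚ) • x) := by
            rw [smul_smul, smul_smul]
            congr 1
            push_cast
            rw [show (n : ℚ) * (a.den : ℚ) * a = ((a.den : ℚ) * a) * n by ring, hda]
          rw [this]
          exact int_smul_mem hnx a.num
    have h2 : ∀ y ∈ Submodule.span ℚ_[p] (L : Set (ℚ_[p] ⊗[ℚ] V)),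
        ∃ t : ℕ, ((p : ℚ_[p])) ^ t • y ∈ L := by
      intro y hy
      have hpnorm : ∀ s : ℕ, ‖((p : ℚ_[p])) ^ s‖ ≤ 1 := by
        intro s
        rw [norm_pow, Padic.norm_p]
        apply pow_le_one₀ (by positivity)
        rw [inv_le_one_iff₀]
        right
        exact_mod_cast hppos
      induction hy using Submodule.span_induction with
      | mem y hys => exact ⟨0, by simpa using hys⟩
      | zero => exact ⟨0, by simpa using L.zero_mem⟩
      | add x y hx hy ihx ihy =>
          obtain ⟨s, hs⟩ := ihx
          obtain ⟨t, ht⟩ := ihy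
          refine ⟨s + t, ?_⟩
          have : ((p : ℚ_[p])) ^ (s + t) • (x + y)
              = ((p : ℚ_[p])) ^ t • (((p : ℚ_[p])) ^ s • x)
                + ((p : ℚ_[p])) ^ s • (((p : ℚ_[p])) ^ t • y) := by
            rw [smul_add, smul_smul, smul_smul, pow_add]
            ring_nf
          rw [this]
          exact L.add_mem
            (L.smul_mem ⟨((p : ℚ_[p])) ^ t, hpnorm t⟩ hs)
            (L.smul_mem ⟨((p : ℚ_[p])) ^ s, hpnorm s⟩ ht)
      | smul c y hy ih =>
          obtain ⟨t, ht⟩ := ih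
          obtain ⟨s, hcs⟩ := exists_nat_pow_ge (Fact.out : p.Prime).two_le ‖c‖
          refine ⟨s + t, ?_⟩
          have heq : ((p : ℚ_[p])) ^ (s + t) • (c • y)
              = (((p : ℚ_[p])) ^ s * c) • (((p : ℚ_[p])) ^ t • y) := by
            rw [smul_smul, smul_smul, pow_add]
            ring_nf
          have hnorm : ‖((p : ℚ_[p])) ^ s * c‖ ≤ 1 := by
            rw [norm_mul, norm_pow, Padic.norm_p]
            calc ((p : ℝ))⁻¹ ^ s * ‖c‖ ≤ ((p : ℝ))⁻¹ ^ s * (p : ℝ) ^ s := by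
                  apply mul_le_mul_of_nonneg_left hcs (by positivity)
              _ = 1 := by
                  rw [← mul_pow, inv_mul_cancel₀ (by exact_mod_cast hppos.ne'), one_pow]
          rw [heq]
          exact L.smul_mem ⟨((p : ℚ_[p])) ^ s * c, hnorm⟩ ht
    obtain ⟨n, hn, hnv⟩ := h1 v (hΛspan ▸ Submodule.mem_top)
    obtain ⟨t, htv⟩ := h2 (φ v) (hLspan ▸ Submodule.mem_top)
    set q : ℚ := (p : ℚ) ^ t * n with hq
    have hq0 : q ≠ 0 := by
      rw [hq]
      have : (n : ℚ) ≠ 0 := by exact_mod_cast hn.ne'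
      positivity
    have hqΛ : q • v ∈ Λ := by
      have : q • v = ((p ^ t : ℤ) : ℚ) • ((n : ℚ) • v) := by
        rw [smul_smul, hq]; push_cast; ring_nf
      rw [this]
      exact int_smul_mem hnv _
    have hqL : φ (q • v) ∈ L := by
      rw [map_smul, rat_smul_tensor]
      have hcast : ((q : ℚ_[p])) = (n : ℚ_[p]) * ((p : ℚ_[p])) ^ t := by
        rw [hq]; push_cast; ring
      have hnn : ‖((n : ℚ_[p]) : ℚ_[p])‖ ≤ 1 := by
        simpa using Padic.norm_int_le_one (p := p) (n : ℤ)
      rw [hcast, ← smul_smul]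
      exact L.smul_mem ⟨(n : ℚ_[p]), hnn⟩ htv
    have hqM : q • v ∈ M := ⟨hqΛ, hqL⟩
    have : v = q⁻¹ • (q • v) := by rw [smul_smul, inv_mul_cancel₀ hq0, one_smul]
    rw [this]
    exact Submodule.smul_mem _ _ (Submodule.subset_span hqM)
end
end

section
/- Let R be an integrally closed domain with fraction field K, and let G be a finite group scheme over R. Then a G-torsor T over Spec R is trivial if and only if its generic fibre T_K is a trivial G_K-torsor. Equivalently, T(R) is nonempty if and only if T(K) is nonempty. -/
/-!
STATEMENT 6: Let R be an integrally closed domain with fraction field K and G = Spec A a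
finite flat group scheme over R (A a Hopf algebra, finite flat as an R-module). A
G-torsor T = Spec B over Spec R (B a comodule algebra whose Galois map B ⊗ B → B ⊗ A is
bijective, finite and faithfully flat over R) is trivial iff its generic fibre is a
trivial G_K-torsor; equivalently T(R) = (B →ₐ[R] R) is nonempty iff T(K) = (B →ₐ[R] K)
is nonempty.
-/

open scoped TensorProduct

noncomputable section

theorem finite_torsor_trivial_iff_generically_trivial
    (R : Type) [CommRing R] [IsDomain R] [IsIntegrallyClosed R]
    -- the finite flat group scheme G = Spec A
    (A : Type) [CommRing A] [HopfAlgebra R A] [Module.Finite R A] [Module.Flat R A]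
    -- the torsor T = Spec B : a comodule algebra, finite and faithfully flat over R
    (B : Type) [CommRing B] [Algebra R B] [Module.Finite R B] [Module.FaithfullyFlat R B]
    (ρ : B →ₐ[R] B ⊗[R] A)
    -- counit axiom for the coaction
    (hcounit :
      ((Algebra.TensorProduct.rid R R B).toAlgHom.comp
        ((Algebra.TensorProduct.map (AlgHom.id R B)
          (Bialgebra.counitAlgHom R A)).comp ρ)) = AlgHom.id R B)
    -- coassociativity axiom for the coaction
    (hcoassoc :
      (Algebra.TensorProduct.map (AlgHom.id R B) (Bialgebra.comulAlgHom R A)).comp ρ =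
        ((Algebra.TensorProduct.assoc R R R B A A).toAlgHom.comp
          ((Algebra.TensorProduct.map ρ (AlgHom.id R A)).comp ρ)))
    -- torsor (Hopf–Galois) axiom: the Galois map B ⊗ B → B ⊗ A is bijective
    (hGalois : Function.Bijective
      (Algebra.TensorProduct.lift (Algebra.TensorProduct.includeLeft : B →ₐ[R] B ⊗[R] A)
        ρ (fun x y => Commute.all _ _))) :
    -- T(R) is nonempty iff T(K) is nonempty
    (Nonempty (B →ₐ[R] R) ↔ Nonempty (B →ₐ[R] FractionRing R)) := by
  constructor
  · rintro ⟨φ⟩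
    exact ⟨(Algebra.ofId R (FractionRing R)).comp φ⟩
  · rintro ⟨φ⟩
    letI : Algebra B (FractionRing R) := φ.toRingHom.toAlgebra
    haveI : IsScalarTower R B (FractionRing R) :=
      IsScalarTower.of_algebraMap_eq fun r => (φ.commutes r).symm
    haveI : Algebra.IsIntegral R B := Algebra.IsIntegral.of_finite R B
    exact ⟨IsIntegralClosure.lift R R (FractionRing R) (S := B)⟩

end
end

section
/- Let S be a scheme, G ↠ Δ a surjection of S-group schemes, H → Δ another S-group homomorphism, and 𝓑 = G ×_Δ H the fibre product group scheme. Let X be an S-scheme, P_G a G-torsor and P_H an H-torsor on X, with an isomorphism of Δ-torsors θ: P_H ×^H Δ ≅ P_G ×^G Δ. Then P_𝓑 := P_G ×_θ P_H (the fibre product over the common pushout to Δ via θ) is a 𝓑-torsor, and it is the unique 𝓑-torsor (up to canonical isomorphism) equipped with isomorphisms θ_G: P_𝓑 ×^𝓑 G ≅ P_G and θ_H: P_𝓑 ×^𝓑 H ≅ P_H such that θ_H ∘ θ_G⁻¹ equals θ. -/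
/-!
STATEMENT 11: Let G ↠ Δ be a surjection of group sheaves (on the étale/fppf site of an
S-scheme X, here abstracted to an arbitrary site), H → Δ another homomorphism, and
𝓑 = G ×_Δ H. Given a G-torsor P_G and an H-torsor P_H together with an isomorphism θ of
Δ-torsors between their pushouts to Δ (the pushouts being presented by equivariant maps
from P_G and P_H to Δ-torsors Q_G, Q_H), the fibre product P_𝓑 = P_G ×_θ P_H is a
𝓑-torsor, and it is the unique 𝓑-torsor with equivariant projections to P_G and P_H
compatible with θ.
-/

open CategoryTheory

universe w v u

noncomputable section

variable {C : Type u} [Category.{v} C]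

/-- A torsor on the site `(C, J)` under a presheaf of groups `G`: a sheaf of sets with a
natural `G`-action that is simply transitive on sections and locally has sections. -/
structure SiteTorsor (J : GrothendieckTopology C) (G : Cᵒᵖ ⥤ GrpCat.{w}) where
  P : Cᵒᵖ ⥤ Type w
  isSheaf : Presieve.IsSheaf J P
  act : ∀ U : Cᵒᵖ, G.obj U → P.obj U → P.obj U
  act_one : ∀ (U : Cᵒᵖ) (p : P.obj U), act U 1 p = p
  act_mul : ∀ (U : Cᵒᵖ) (g g' : G.obj U) (p : P.obj U),
    act U (g * g') p = act U g (act U g' p)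
  act_natural : ∀ {U V : Cᵒᵖ} (f : U ⟶ V) (g : G.obj U) (p : P.obj U),
    P.map f (act U g p) = act V (G.map f g) (P.map f p)
  simply_transitive : ∀ (U : Cᵒᵖ) (p q : P.obj U), ∃! g : G.obj U, act U g p = q
  locally_nonempty : ∀ U : C, ∃ S : Sieve U, S ∈ J U ∧
    ∀ {V : C} (f : V ⟶ U), S.arrows f → Nonempty (P.obj (Opposite.op V))

/-- An equivariant map of torsors along a homomorphism `φ : G ⟶ Δ` of group presheaves. -/
structure TorsorMap {J : GrothendieckTopology C} {G Δ : Cᵒᵖ ⥤ GrpCat.{w}} (φ : G ⟶ Δ)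
    (P : SiteTorsor J G) (Q : SiteTorsor J Δ) where
  t : P.P ⟶ Q.P
  equivariant : ∀ (U : Cᵒᵖ) (g : G.obj U) (p : P.P.obj U),
    t.app U (P.act U g p) = Q.act U (φ.app U g) (t.app U p)


section Construction

open Opposite

variable {J : GrothendieckTopology C} {G H Δ B : Cᵒᵖ ⥤ GrpCat.{w}}

theorem natApp_apply {F K : Cᵒᵖ ⥤ GrpCat.{w}} (τ : F ⟶ K) {U V : Cᵒᵖ} (f : U ⟶ V)
    (x : F.obj U) : τ.app V (F.map f x) = K.map f (τ.app U x) :=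
  NatTrans.naturality_apply τ f x

theorem id_app_apply {F : Cᵒᵖ ⥤ GrpCat.{w}} (U : Cᵒᵖ) (x : F.obj U) :
    NatTrans.app (𝟙 F) U x = x := rfl

theorem hom_congr_apply {F K : Cᵒᵖ ⥤ GrpCat.{w}} {τ σ : F ⟶ K} (h : τ = σ) (U : Cᵒᵖ)
    (x : F.obj U) : τ.app U x = σ.app U x := by rw [h]

/-- Sections of a sheaf agreeing on a covering sieve are equal. -/
theorem SiteTorsor.sections_ext {A : Cᵒᵖ ⥤ GrpCat.{w}} (P : SiteTorsor J A) {U : C}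
    (S : Sieve U) (hS : S ∈ J U) {t₁ t₂ : P.P.obj (op U)}
    (h : ∀ ⦃V : C⦄ (f : V ⟶ U), S.arrows f → P.P.map f.op t₁ = P.P.map f.op t₂) :
    t₁ = t₂ :=
  (P.isSheaf S hS).isSeparatedFor.ext (fun _ _ hf => h _ hf)

theorem TorsorMap.ext' {A A' : Cᵒᵖ ⥤ GrpCat.{w}} {φ : A ⟶ A'} {P : SiteTorsor J A}
    {Q : SiteTorsor J A'} {f g : TorsorMap φ P Q} (h : f.t = g.t) : f = g := by
  cases f; cases g; cases h; rfl

/-- A map of `B`-torsors along the identity is sectionwise injective. -/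
theorem TorsorMap.injective {P Q : SiteTorsor J B} (f : TorsorMap (𝟙 B) P Q) (U : Cᵒᵖ) :
    Function.Injective (f.t.app U) := by
  intro x y hxy
  obtain ⟨b, hb, -⟩ := P.simply_transitive U x y
  have h1 := f.equivariant U b x
  rw [hb, hxy, id_app_apply] at h1
  obtain ⟨g0, -, huniq⟩ := Q.simply_transitive U (f.t.app U y) (f.t.app U y)
  have hb1 : b = 1 := (huniq b h1.symm).trans (huniq 1 (Q.act_one _ _)).symm
  rw [← hb, hb1, P.act_one]

/-- A map of `B`-torsors along the identity is sectionwise surjective. -/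
theorem TorsorMap.surjective {P Q : SiteTorsor J B} (f : TorsorMap (𝟙 B) P Q) (U : Cᵒᵖ) :
    Function.Surjective (f.t.app U) := by
  intro q
  obtain ⟨S, hS, hsec⟩ := P.locally_nonempty U.unop
  have key : ∀ (V : C) (g : V ⟶ U.unop), S.arrows g →
      ∃ p : P.P.obj (op V), f.t.app (op V) p = Q.P.map g.op q := by
    intro V g hg
    obtain ⟨x⟩ := hsec g hg
    obtain ⟨b, hb, -⟩ := Q.simply_transitive (op V) (f.t.app (op V) x) (Q.P.map g.op q)
    refine ⟨P.act (op V) b x, ?_⟩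
    rw [f.equivariant, id_app_apply]
    exact hb
  choose p hp using key
  let fam : Presieve.FamilyOfElements P.P S.arrows := fun V g hg => p V g hg
  have compat : fam.Compatible := by
    intro Y₁ Y₂ Z g₁ g₂ f₁ f₂ h₁ h₂ hc
    apply f.injective (op Z)
    rw [FunctorToTypes.naturality, FunctorToTypes.naturality]
    show Q.P.map g₁.op (f.t.app _ (p _ f₁ h₁)) = Q.P.map g₂.op (f.t.app _ (p _ f₂ h₂))
    rw [hp, hp, ← FunctorToTypes.map_comp_apply, ← FunctorToTypes.map_comp_apply,
      ← op_comp, ← op_comp, hc]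
  obtain ⟨t, ht, -⟩ := P.isSheaf S hS fam compat
  refine ⟨t, ?_⟩
  apply Q.sections_ext S hS
  intro V g hg
  rw [← FunctorToTypes.naturality, ht g hg]
  exact hp V g hg

variable (φG : G ⟶ Δ) (φH : H ⟶ Δ) (πG : B ⟶ G) (πH : B ⟶ H)
  (PG : SiteTorsor J G) (PH : SiteTorsor J H) (QG QH : SiteTorsor J Δ)
  (eG : TorsorMap φG PG QG) (eH : TorsorMap φH PH QH)
  (θ : TorsorMap (𝟙 Δ) QH QG)

/-- The underlying presheaf of the fibre product `P_G ×_θ P_H`. -/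
def fibPresheaf : Cᵒᵖ ⥤ Type w where
  obj U := {x : PG.P.obj U × PH.P.obj U // eG.t.app U x.1 = θ.t.app U (eH.t.app U x.2)}
  map {U V} f := TypeCat.ofHom fun x => ⟨(PG.P.map f x.1.1, PH.P.map f x.1.2), by
    rw [FunctorToTypes.naturality, FunctorToTypes.naturality, x.2,
      FunctorToTypes.naturality]⟩
  map_id U := by
    ext x
    all_goals simp
  map_comp f g := by
    ext x
    all_goals simp

/-- The fibre product `P_G ×_θ P_H` as a `B`-torsor. -/
def fibTorsor
    (hsurj : ∀ U : Cᵒᵖ, Function.Surjective (φG.app U))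
    (hcomm : πG ≫ φG = πH ≫ φH)
    (hpullback : ∀ (U : Cᵒᵖ) (g : G.obj U) (h : H.obj U), φG.app U g = φH.app U h →
      ∃! b : B.obj U, πG.app U b = g ∧ πH.app U b = h) :
    SiteTorsor J B where
  P := fibPresheaf (eG := eG) (eH := eH) (θ := θ)
  isSheaf := by
    intro X S hS x hx
    let xG : Presieve.FamilyOfElements PG.P S.arrows := fun V g hg => (x g hg).1.1
    let xH : Presieve.FamilyOfElements PH.P S.arrows := fun V g hg => (x g hg).1.2
    have compatG : xG.Compatible := by
      intro Y₁ Y₂ Z g₁ g₂ f₁ f₂ h₁ h₂ hc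
      exact congrArg (fun y => y.1.1) (hx g₁ g₂ h₁ h₂ hc)
    have compatH : xH.Compatible := by
      intro Y₁ Y₂ Z g₁ g₂ f₁ f₂ h₁ h₂ hc
      exact congrArg (fun y => y.1.2) (hx g₁ g₂ h₁ h₂ hc)
    obtain ⟨tG, htG, huG⟩ := PG.isSheaf S hS xG compatG
    obtain ⟨tH, htH, huH⟩ := PH.isSheaf S hS xH compatH
    have htG' : ∀ ⦃V : C⦄ (g : V ⟶ X) (hg : S.arrows g),
        PG.P.map g.op tG = (x g hg).1.1 := htG
    have htH' : ∀ ⦃V : C⦄ (g : V ⟶ X) (hg : S.arrows g),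
        PH.P.map g.op tH = (x g hg).1.2 := htH
    have hcond : eG.t.app (op X) tG = θ.t.app (op X) (eH.t.app (op X) tH) := by
      apply QG.sections_ext S hS
      intro V g hg
      rw [← FunctorToTypes.naturality, htG' g hg, (x g hg).2,
        ← FunctorToTypes.naturality, ← FunctorToTypes.naturality, htH' g hg]
    refine ⟨⟨(tG, tH), hcond⟩, ?_, ?_⟩
    · intro V g hg
      apply Subtype.ext
      show (PG.P.map g.op tG, PH.P.map g.op tH) = (x g hg).1
      rw [htG' g hg, htH' g hg]
    · intro t' ht'
      apply Subtype.ext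
      have h1 : xG.IsAmalgamation t'.1.1 := fun V g hg =>
        congrArg (fun y => y.1.1) (ht' g hg)
      have h2 : xH.IsAmalgamation t'.1.2 := fun V g hg =>
        congrArg (fun y => y.1.2) (ht' g hg)
      show t'.1 = (tG, tH)
      rw [← huG t'.1.1 h1, ← huH t'.1.2 h2]
  act U b x := ⟨(PG.act U (πG.app U b) x.1.1, PH.act U (πH.app U b) x.1.2), by
    have hcomm' : φG.app U (πG.app U b) = φH.app U (πH.app U b) := by
      simpa using hom_congr_apply hcomm U b
    have θeq : ∀ (δ : Δ.obj U) (q : QH.P.obj U),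
        θ.t.app U (QH.act U δ q) = QG.act U δ (θ.t.app U q) := θ.equivariant U
    show eG.t.app U (PG.act U (πG.app U b) x.1.1) =
      θ.t.app U (eH.t.app U (PH.act U (πH.app U b) x.1.2))
    rw [eG.equivariant, x.2, hcomm', ← θeq, ← eH.equivariant]⟩
  act_one U x := by
    apply Subtype.ext
    show (PG.act U (πG.app U 1) x.1.1, PH.act U (πH.app U 1) x.1.2) = x.1
    rw [map_one, map_one, PG.act_one, PH.act_one]
  act_mul U b b' x := by
    apply Subtype.ext
    show (PG.act U (πG.app U (b * b')) x.1.1, PH.act U (πH.app U (b * b')) x.1.2) =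
      (PG.act U (πG.app U b) (PG.act U (πG.app U b') x.1.1),
        PH.act U (πH.app U b) (PH.act U (πH.app U b') x.1.2))
    rw [map_mul, map_mul, PG.act_mul, PH.act_mul]
  act_natural {U V} f b x := by
    apply Subtype.ext
    show (PG.P.map f (PG.act U (πG.app U b) x.1.1),
        PH.P.map f (PH.act U (πH.app U b) x.1.2)) =
      (PG.act V (πG.app V (B.map f b)) (PG.P.map f x.1.1),
        PH.act V (πH.app V (B.map f b)) (PH.P.map f x.1.2))
    rw [PG.act_natural, PH.act_natural, natApp_apply πG, natApp_apply πH]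
  simply_transitive := by
    rintro U ⟨⟨pG, pH⟩, hp⟩ ⟨⟨pG', pH'⟩, hp'⟩
    obtain ⟨g, hg, hgU⟩ := PG.simply_transitive U pG pG'
    obtain ⟨h, hh, hhU⟩ := PH.simply_transitive U pH pH'
    have hp₁ : eG.t.app U pG = θ.t.app U (eH.t.app U pH) := hp
    have hp₁' : eG.t.app U pG' = θ.t.app U (eH.t.app U pH') := hp'
    have hmatch : φG.app U g = φH.app U h := by
      obtain ⟨δ0, -, hδU⟩ :=
        QG.simply_transitive U (θ.t.app U (eH.t.app U pH)) (θ.t.app U (eH.t.app U pH'))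
      refine (hδU _ ?_).trans (hδU _ ?_).symm
      · show QG.act U (φG.app U g) (θ.t.app U (eH.t.app U pH)) =
          θ.t.app U (eH.t.app U pH')
        rw [← hp₁, ← hp₁', ← eG.equivariant, hg]
      · show QG.act U (φH.app U h) (θ.t.app U (eH.t.app U pH)) =
          θ.t.app U (eH.t.app U pH')
        have θeq : ∀ (δ : Δ.obj U) (q : QH.P.obj U),
            θ.t.app U (QH.act U δ q) = QG.act U δ (θ.t.app U q) := θ.equivariant U
        rw [← θeq, ← eH.equivariant, hh]
    obtain ⟨b, ⟨hbG, hbH⟩, hbU⟩ := hpullback U g h hmatch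
    refine ⟨b, ?_, ?_⟩
    · apply Subtype.ext
      show (PG.act U (πG.app U b) pG, PH.act U (πH.app U b) pH) = (pG', pH')
      rw [hbG, hbH, hg, hh]
    · rintro b' hb'
      have h1 : PG.act U (πG.app U b') pG = pG' := congrArg (fun y => y.1.1) hb'
      have h2 : PH.act U (πH.app U b') pH = pH' := congrArg (fun y => y.1.2) hb'
      exact hbU b' ⟨hgU _ h1, hhU _ h2⟩
  locally_nonempty U := by
    obtain ⟨S₁, hS₁, hsec₁⟩ := PG.locally_nonempty U
    obtain ⟨S₂, hS₂, hsec₂⟩ := PH.locally_nonempty U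
    refine ⟨S₁ ⊓ S₂, J.intersection_covering hS₁ hS₂, ?_⟩
    intro V f hf
    obtain ⟨pG⟩ := hsec₁ f hf.1
    obtain ⟨pH⟩ := hsec₂ f hf.2
    obtain ⟨δ, hδ, -⟩ := QG.simply_transitive (op V)
      (eG.t.app (op V) pG) (θ.t.app (op V) (eH.t.app (op V) pH))
    obtain ⟨g, hgδ⟩ := hsurj (op V) δ
    refine ⟨⟨(PG.act (op V) g pG, pH), ?_⟩⟩
    rw [eG.equivariant, hgδ, hδ]

end Construction

theorem torsor_fibre_product
    (J : GrothendieckTopology C) (G H Δ B : Cᵒᵖ ⥤ GrpCat.{w})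
    (φG : G ⟶ Δ) (φH : H ⟶ Δ)
    -- G ↠ Δ is (locally, hence on a site with enough points, sectionwise w.l.o.g.) surjective
    (hsurj : ∀ U : Cᵒᵖ, Function.Surjective (φG.app U))
    -- B = G ×_Δ H
    (πG : B ⟶ G) (πH : B ⟶ H)
    (hcomm : πG ≫ φG = πH ≫ φH)
    (hpullback : ∀ (U : Cᵒᵖ) (g : G.obj U) (h : H.obj U), φG.app U g = φH.app U h →
      ∃! b : B.obj U, πG.app U b = g ∧ πH.app U b = h)
    -- the torsors P_G and P_H, and their pushouts Q_G = P_G ×^G Δ, Q_H = P_H ×^H Δ,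
    -- presented by equivariant maps
    (PG : SiteTorsor J G) (PH : SiteTorsor J H) (QG QH : SiteTorsor J Δ)
    (eG : TorsorMap φG PG QG) (eH : TorsorMap φH PH QH)
    -- θ : P_H ×^H Δ ≅ P_G ×^G Δ, an isomorphism of Δ-torsors
    (θ : TorsorMap (𝟙 Δ) QH QG) :
    -- existence: the fibre product P_G ×_θ P_H is a B-torsor with equivariant
    -- projections to P_G and P_H compatible with θ
    (∃ (PB : SiteTorsor J B) (ρG : TorsorMap πG PB PG) (ρH : TorsorMap πH PB PH),
      (∀ (U : Cᵒᵖ) (x : PB.P.obj U),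
        eG.t.app U (ρG.t.app U x) = θ.t.app U (eH.t.app U (ρH.t.app U x))) ∧
      ∀ (U : Cᵒᵖ) (pG : PG.P.obj U) (pH : PH.P.obj U),
        eG.t.app U pG = θ.t.app U (eH.t.app U pH) →
        ∃! x : PB.P.obj U, ρG.t.app U x = pG ∧ ρH.t.app U x = pH) ∧
    -- uniqueness: any B-torsor with compatible equivariant projections is canonically
    -- isomorphic to it
    (∀ (PB PB' : SiteTorsor J B)
      (ρG : TorsorMap πG PB PG) (ρH : TorsorMap πH PB PH)
      (ρG' : TorsorMap πG PB' PG) (ρH' : TorsorMap πH PB' PH),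
      (∀ (U : Cᵒᵖ) (x : PB.P.obj U),
        eG.t.app U (ρG.t.app U x) = θ.t.app U (eH.t.app U (ρH.t.app U x))) →
      (∀ (U : Cᵒᵖ) (x : PB'.P.obj U),
        eG.t.app U (ρG'.t.app U x) = θ.t.app U (eH.t.app U (ρH'.t.app U x))) →
      ∃! ι : TorsorMap (𝟙 B) PB' PB,
        (∀ (U : Cᵒᵖ) (x : PB'.P.obj U), ρG.t.app U (ι.t.app U x) = ρG'.t.app U x) ∧
        (∀ (U : Cᵒᵖ) (x : PB'.P.obj U), ρH.t.app U (ι.t.app U x) = ρH'.t.app U x)) := by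
  classical
  set PB0 := fibTorsor (φG := φG) (φH := φH) (πG := πG) (πH := πH) (PG := PG) (PH := PH)
    (QG := QG) (QH := QH) (eG := eG) (eH := eH) (θ := θ) (hsurj := hsurj) (hcomm := hcomm)
    (hpullback := hpullback) with hPB0
  have fib_act : ∀ (U : Cᵒᵖ) (b : B.obj U) (x : PB0.P.obj U),
      PB0.act U b x = ⟨(PG.act U (πG.app U b) x.1.1, PH.act U (πH.app U b) x.1.2),
        (PB0.act U b x).2⟩ := fun U b x => rfl
  let ρG0 : TorsorMap πG PB0 PG :=
    { t := { app := fun U => TypeCat.ofHom fun x => x.1.1, naturality := fun U V f => rfl }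
      equivariant := fun U b x => rfl }
  let ρH0 : TorsorMap πH PB0 PH :=
    { t := { app := fun U => TypeCat.ofHom fun x => x.1.2, naturality := fun U V f => rfl }
      equivariant := fun U b x => rfl }
  constructor
  · refine ⟨PB0, ρG0, ρH0, fun U x => x.2, ?_⟩
    intro U pG pH hcompat
    refine ⟨⟨(pG, pH), hcompat⟩, ⟨rfl, rfl⟩, ?_⟩
    rintro ⟨⟨a, b⟩, hab⟩ ⟨h1, h2⟩
    apply Subtype.ext
    exact Prod.ext h1 h2
  · intro PB PB' ρG ρH ρG' ρH' hcompat hcompat'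
    -- the comparison maps to the fibre product
    let fB : TorsorMap (𝟙 B) PB PB0 :=
      { t :=
        { app := fun U => TypeCat.ofHom fun x => ⟨(ρG.t.app U x, ρH.t.app U x), hcompat U x⟩
          naturality := fun U V f => by
            ext x
            apply Subtype.ext
            show (ρG.t.app V (PB.P.map f x), ρH.t.app V (PB.P.map f x)) = _
            rw [FunctorToTypes.naturality, FunctorToTypes.naturality]
            rfl }
        equivariant := fun U b x => by
          apply Subtype.ext
          show (ρG.t.app U (PB.act U b x), ρH.t.app U (PB.act U b x)) = _
          rw [ρG.equivariant, ρH.equivariant, fib_act]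
          rfl }
    let fB' : TorsorMap (𝟙 B) PB' PB0 :=
      { t :=
        { app := fun U => TypeCat.ofHom fun x => ⟨(ρG'.t.app U x, ρH'.t.app U x), hcompat' U x⟩
          naturality := fun U V f => by
            ext x
            apply Subtype.ext
            show (ρG'.t.app V (PB'.P.map f x), ρH'.t.app V (PB'.P.map f x)) = _
            rw [FunctorToTypes.naturality, FunctorToTypes.naturality]
            rfl }
        equivariant := fun U b x => by
          apply Subtype.ext
          show (ρG'.t.app U (PB'.act U b x), ρH'.t.app U (PB'.act U b x)) = _
          rw [ρG'.equivariant, ρH'.equivariant, fib_act]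
          rfl }
    let E : ∀ U : Cᵒᵖ, PB.P.obj U ≃ PB0.P.obj U := fun U =>
      Equiv.ofBijective (fB.t.app U) ⟨fB.injective U, fB.surjective U⟩
    have hE : ∀ (U : Cᵒᵖ) (y : PB0.P.obj U), fB.t.app U ((E U).symm y) = y := fun U y =>
      (E U).apply_symm_apply y
    let ι : TorsorMap (𝟙 B) PB' PB :=
      { t :=
        { app := fun U => TypeCat.ofHom fun x => (E U).symm (fB'.t.app U x)
          naturality := fun U V f => by
            ext x
            apply (E V).injective
            show fB.t.app V ((E V).symm (fB'.t.app V (PB'.P.map f x))) =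
              fB.t.app V (PB.P.map f ((E U).symm (fB'.t.app U x)))
            rw [hE, NatTrans.naturality_apply fB.t, hE,
              ← NatTrans.naturality_apply fB'.t] }
        equivariant := fun U b x => by
          apply (E U).injective
          show fB.t.app U ((E U).symm (fB'.t.app U (PB'.act U b x))) =
            fB.t.app U (PB.act U (NatTrans.app (𝟙 B) U b) ((E U).symm (fB'.t.app U x)))
          rw [hE, fB.equivariant, hE, fB'.equivariant]
          rfl }
    have hιG : ∀ (U : Cᵒᵖ) (x : PB'.P.obj U), ρG.t.app U (ι.t.app U x) = ρG'.t.app U x := by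
      intro U x
      have := hE U (fB'.t.app U x)
      exact congrArg (fun y => y.1.1) this
    have hιH : ∀ (U : Cᵒᵖ) (x : PB'.P.obj U), ρH.t.app U (ι.t.app U x) = ρH'.t.app U x := by
      intro U x
      have := hE U (fB'.t.app U x)
      exact congrArg (fun y => y.1.2) this
    refine ⟨ι, ⟨hιG, hιH⟩, ?_⟩
    rintro ι' ⟨h1, h2⟩
    apply TorsorMap.ext'
    apply NatTrans.ext
    funext U
    ext x
    apply (E U).injective
    show fB.t.app U (ι'.t.app U x) = fB.t.app U ((E U).symm (fB'.t.app U x))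
    rw [hE]
    apply Subtype.ext
    exact Prod.ext (h1 U x) (h2 U x)

end
end
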